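/- arXiv:1502.02049 — 8 statements merged into one kernel-verified Lean document; each statement's English description precedes it below -/
import Mathlib

section
/- Let N ≥ 1 and let ψ, φ : ℝ → ℂ be such that the functions t ↦ t^k·ψ(t) and t ↦ t^k·φ(t) are integrable for every k with 0 ≤ k ≤ N-1, and suppose 𝓕φ(ω) = -i·sgn(ω)·𝓕ψ(ω) for every ω ∈ ℝ (i.e., φ is a Hilbert transform pair of ψ). If ψ has N vanishing moments, i.e. ∫ℝ t^k·ψ(t) dt = 0 for every k with 0 ≤ k ≤ N-1, then φ also has N vanishing moments: ∫ℝ t^k·φ(t) dt = 0 for every k with 0 ≤ k ≤ N-1. (Proposition 2: the Hilbert transform of a wavelet with N vanishing moments has at least N vanishing moments.) -/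
open MeasureTheory FourierTransform Topology Filter

lemma aux_cont {f : ℝ → ℂ} (hf : Integrable f) : Continuous (𝓕 f) :=
  VectorFourier.fourierIntegral_continuous Real.continuous_fourierChar
    (by exact continuous_inner) hf

lemma aux_zero (f : ℝ → ℂ) : 𝓕 f 0 = ∫ t, f t := by
  simp [Real.fourier_eq]

/-- Proposition 2: the Hilbert transform of a wavelet with `N` vanishing moments
has (at least) `N` vanishing moments. -/
theorem stmt_6 (N : ℕ) (hN : 1 ≤ N) (ψ φ : ℝ → ℂ)
    (hψ : ∀ k : ℕ, k ≤ N - 1 → Integrable (fun t : ℝ => (t : ℂ) ^ k * ψ t))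
    (hφ : ∀ k : ℕ, k ≤ N - 1 → Integrable (fun t : ℝ => (t : ℂ) ^ k * φ t))
    (h : ∀ ω : ℝ, 𝓕 φ ω = -Complex.I * (Real.sign ω : ℂ) * 𝓕 ψ ω)
    (hm : ∀ k : ℕ, k ≤ N - 1 → ∫ t : ℝ, (t : ℂ) ^ k * ψ t = 0) :
    ∀ k : ℕ, k ≤ N - 1 → ∫ t : ℝ, (t : ℂ) ^ k * φ t = 0 := by
  intro k hk
  set ψ' : ℝ → ℂ := fun t => -Complex.I * ψ t with hψ'def
  set c : ℂ := (-2 * Real.pi * Complex.I) ^ k with hc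
  -- integrability in smul form
  have hψs : ∀ i : ℕ, (i : ℕ∞) ≤ (k : ℕ∞) → Integrable (fun x : ℝ => x ^ i • ψ x) := by
    intro i hi
    have hi' : i ≤ N - 1 := le_trans (by exact_mod_cast hi) hk
    apply (hψ i hi').congr
    filter_upwards with x
    simp [Complex.real_smul]
  have hφs : ∀ i : ℕ, (i : ℕ∞) ≤ (k : ℕ∞) → Integrable (fun x : ℝ => x ^ i • φ x) := by
    intro i hi
    have hi' : i ≤ N - 1 := le_trans (by exact_mod_cast hi) hk
    apply (hφ i hi').congr
    filter_upwards with x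
    simp [Complex.real_smul]
  have hψ's : ∀ i : ℕ, (i : ℕ∞) ≤ (k : ℕ∞) → Integrable (fun x : ℝ => x ^ i • ψ' x) := by
    intro i hi
    apply ((hψs i hi).const_mul (-Complex.I)).congr
    filter_upwards with x
    simp only [hψ'def, Complex.real_smul]
    ring
  have keyφ : iteratedDeriv k (𝓕 φ)
      = 𝓕 (fun x : ℝ => (-2 * Real.pi * Complex.I * x) ^ k • φ x) :=
    Real.iteratedDeriv_fourier (N := (k : ℕ∞)) hφs le_rfl
  have keyψ' : iteratedDeriv k (𝓕 ψ')
      = 𝓕 (fun x : ℝ => (-2 * Real.pi * Complex.I * x) ^ k • ψ' x) :=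
    Real.iteratedDeriv_fourier (N := (k : ℕ∞)) hψ's le_rfl
  -- Fourier transform of ψ'
  have hFψ' : ∀ w : ℝ, 𝓕 ψ' w = -Complex.I * 𝓕 ψ w := by
    intro w
    rw [Real.fourier_eq, Real.fourier_eq, ← integral_const_mul]
    congr 1
    funext v
    simp only [hψ'def, Circle.smul_def, smul_eq_mul]
    ring
  -- on positive reals, the k-th derivatives agree
  have heq : ∀ ω : ℝ, 0 < ω → iteratedDeriv k (𝓕 φ) ω = iteratedDeriv k (𝓕 ψ') ω := by
    intro ω hω
    apply Filter.EventuallyEq.iteratedDeriv_eq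
    filter_upwards [eventually_gt_nhds hω] with x hx
    rw [h x, hFψ' x, Real.sign_of_pos hx]
    push_cast
    ring
  -- integrability of the two integrands
  have hgφ : Integrable (fun x : ℝ => (-2 * Real.pi * Complex.I * x) ^ k • φ x) := by
    apply ((hφ k hk).const_mul c).congr
    filter_upwards with x
    simp only [smul_eq_mul, hc]
    push_cast
    ring
  have hgψ' : Integrable (fun x : ℝ => (-2 * Real.pi * Complex.I * x) ^ k • ψ' x) := by
    apply ((hψ k hk).const_mul (c * -Complex.I)).congr
    filter_upwards with x
    simp only [smul_eq_mul, hψ'def, hc]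
    push_cast
    ring
  -- the two Fourier transforms agree at 0, by continuity and agreement on (0, ∞)
  have h1 : Tendsto (𝓕 (fun x : ℝ => (-2 * Real.pi * Complex.I * x) ^ k • φ x))
      (𝓝[>] (0 : ℝ)) (𝓝 (𝓕 (fun x : ℝ => (-2 * Real.pi * Complex.I * x) ^ k • φ x) 0)) :=
    ((aux_cont hgφ).tendsto 0).mono_left nhdsWithin_le_nhds
  have h2 : Tendsto (𝓕 (fun x : ℝ => (-2 * Real.pi * Complex.I * x) ^ k • φ x))
      (𝓝[>] (0 : ℝ)) (𝓝 (𝓕 (fun x : ℝ => (-2 * Real.pi * Complex.I * x) ^ k • ψ' x) 0)) := by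
    apply (((aux_cont hgψ').tendsto 0).mono_left nhdsWithin_le_nhds).congr'
    filter_upwards [self_mem_nhdsWithin] with x hx
    have := heq x hx
    rw [keyφ, keyψ'] at this
    exact this.symm
  have h0 : 𝓕 (fun x : ℝ => (-2 * Real.pi * Complex.I * x) ^ k • φ x) 0
      = 𝓕 (fun x : ℝ => (-2 * Real.pi * Complex.I * x) ^ k • ψ' x) 0 :=
    tendsto_nhds_unique h1 h2
  -- compute both sides
  have hrhs : 𝓕 (fun x : ℝ => (-2 * Real.pi * Complex.I * x) ^ k • ψ' x) 0 = 0 := by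
    rw [aux_zero]
    have : (fun x : ℝ => (-2 * Real.pi * Complex.I * x) ^ k • ψ' x)
        = fun x : ℝ => (c * -Complex.I) * ((x : ℂ) ^ k * ψ x) := by
      funext x
      simp only [smul_eq_mul, hψ'def, hc]
      push_cast
      ring
    rw [this, integral_const_mul, hm k hk, mul_zero]
  have hlhs : 𝓕 (fun x : ℝ => (-2 * Real.pi * Complex.I * x) ^ k • φ x) 0
      = c * ∫ t : ℝ, (t : ℂ) ^ k * φ t := by
    rw [aux_zero]
    have : (fun x : ℝ => (-2 * Real.pi * Complex.I * x) ^ k • φ x)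
        = fun x : ℝ => c * ((x : ℂ) ^ k * φ x) := by
      funext x
      simp only [smul_eq_mul, hc]
      push_cast
      ring
    rw [this, integral_const_mul]
  have hc0 : c ≠ 0 := by
    apply pow_ne_zero
    simp [Real.pi_ne_zero, Complex.I_ne_zero, Complex.ext_iff, Real.pi_pos.ne']
  have := h0
  rw [hlhs, hrhs] at this
  exact (mul_eq_zero.mp this).resolve_left hc0
end

section
/- Let ψ : ℝ → ℂ be integrable, square-integrable, and real-valued, with Fourier transform Ψ = 𝓕ψ. Then the Fourier-Like kernel Φ(ω) = (1/√2)·(1 - sgn(ω))·Ψ(ω) has the same energy in the frequency domain as Ψ: ∫ℝ ‖(1/√2)·(1 - sgn(ω))·Ψ(ω)‖² dω = ∫ℝ ‖Ψ(ω)‖² dω. (Energy part of Proposition 3: the Fourier-Like wavelet 𝓕-kernel (ψ - i·ℋψ)/√2 has the same energy as its generating wavelet ψ.) -/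
open MeasureTheory FourierTransform

private lemma fourier_continuous' {ψ : ℝ → ℂ} (hψ1 : Integrable ψ) :
    Continuous (𝓕 ψ) :=
  VectorFourier.fourierIntegral_continuous Real.continuous_fourierChar
    (by exact continuous_inner) hψ1

private lemma fourier_conj' {ψ : ℝ → ℂ} (hψreal : ∀ t, (ψ t).im = 0) (ω : ℝ) :
    starRingEnd ℂ (𝓕 ψ ω) = 𝓕 ψ (-ω) := by
  rw [Real.fourier_real_eq_integral_exp_smul,
    Real.fourier_real_eq_integral_exp_smul, ← integral_conj]
  congr 1
  ext v
  simp only [smul_eq_mul, map_mul, ← Complex.exp_conj]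
  rw [Complex.conj_eq_iff_im.2 (hψreal v)]
  congr 2
  simp [Complex.ext_iff]

/-- Energy part of Proposition 3: the Fourier-Like kernel
`(1/√2)·(1 - sgn ω)·Ψ(ω)` has the same frequency-domain energy as `Ψ = 𝓕ψ`,
for `ψ` a real-valued wavelet. -/
theorem stmt_7 (ψ : ℝ → ℂ)
    (hψ1 : Integrable ψ) (hψ2 : MemLp ψ 2 (volume : Measure ℝ))
    (hψreal : ∀ t : ℝ, (ψ t).im = 0) :
    ∫ ω : ℝ, ‖(1 / Real.sqrt 2 : ℂ) * ((1 : ℂ) - (Real.sign ω : ℂ)) * 𝓕 ψ ω‖ ^ 2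
      = ∫ ω : ℝ, ‖𝓕 ψ ω‖ ^ 2 := by
  have hcont : Continuous (𝓕 ψ) := fourier_continuous' hψ1
  have hnormneg : ∀ ω : ℝ, ‖𝓕 ψ (-ω)‖ = ‖𝓕 ψ ω‖ := fun ω => by
    rw [← fourier_conj' hψreal]; exact RCLike.norm_conj _
  set G : ℝ → ENNReal := fun ω => ENNReal.ofReal (‖𝓕 ψ ω‖ ^ 2) with hGdef
  have hGmeas : Measurable G :=
    ENNReal.measurable_ofReal.comp ((hcont.norm.pow 2).measurable)
  -- measurability of the LHS integrand
  have hsgn0 : Measurable Real.sign := by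
    unfold Real.sign
    exact (measurable_const.ite measurableSet_Iio
      (measurable_const.ite measurableSet_Ioi measurable_const))
  have hsgn : Measurable fun ω : ℝ => ((Real.sign ω : ℝ) : ℂ) :=
    Complex.measurable_ofReal.comp hsgn0
  have hFmeas : Measurable fun ω : ℝ =>
      ‖(1 / Real.sqrt 2 : ℂ) * ((1 : ℂ) - (Real.sign ω : ℂ)) * 𝓕 ψ ω‖ ^ 2 :=
    ((((measurable_const.sub hsgn).const_mul _).mul hcont.measurable).norm.pow
      measurable_const)
  -- rewrite both sides as lower Lebesgue integrals
  rw [integral_eq_lintegral_of_nonneg_ae (Filter.Eventually.of_forall fun ω => sq_nonneg _)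
      hFmeas.aestronglyMeasurable,
    integral_eq_lintegral_of_nonneg_ae (Filter.Eventually.of_forall fun ω => sq_nonneg _)
      (hcont.norm.pow 2).aestronglyMeasurable]
  congr 1
  -- the left lintegral equals 2 * ∫⁻ over Iio 0 of G
  have hIci : (Set.Iio (0:ℝ))ᶜ = Set.Ici 0 := by simp
  have hL : ∫⁻ ω : ℝ, ENNReal.ofReal
        (‖(1 / Real.sqrt 2 : ℂ) * ((1 : ℂ) - (Real.sign ω : ℂ)) * 𝓕 ψ ω‖ ^ 2)
      = 2 * ∫⁻ ω in Set.Iio (0:ℝ), G ω := by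
    rw [← lintegral_add_compl _ measurableSet_Iio, hIci]
    have h1 : ∫⁻ ω in Set.Iio (0:ℝ), ENNReal.ofReal
          (‖(1 / Real.sqrt 2 : ℂ) * ((1 : ℂ) - (Real.sign ω : ℂ)) * 𝓕 ψ ω‖ ^ 2)
        = ∫⁻ ω in Set.Iio (0:ℝ), 2 * G ω := by
      apply setLIntegral_congr_fun measurableSet_Iio
      intro ω hω
      beta_reduce
      rw [Real.sign_of_neg hω]
      have : ((1 : ℂ) - ((-1 : ℝ) : ℂ)) = 2 := by norm_num
      rw [this]
      have hnorm : ‖(1 / Real.sqrt 2 : ℂ) * (2 : ℂ) * 𝓕 ψ ω‖ ^ 2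
          = 2 * ‖𝓕 ψ ω‖ ^ 2 := by
        rw [norm_mul, norm_mul, mul_pow, mul_pow]
        have h2 : ‖(1 / Real.sqrt 2 : ℂ)‖ ^ 2 = 1 / 2 := by
          rw [norm_div, norm_one, Complex.norm_real, Real.norm_eq_abs, div_pow, one_pow,
            sq_abs, Real.sq_sqrt (by norm_num)]
        have h3 : ‖(2 : ℂ)‖ ^ 2 = 4 := by
          simp [Complex.norm_ofNat]; norm_num
        rw [h2, h3]; ring
      rw [hnorm, hGdef, ENNReal.ofReal_mul (by norm_num)]
      norm_num
    have h2 : ∫⁻ ω in Set.Ici (0:ℝ), ENNReal.ofReal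
          (‖(1 / Real.sqrt 2 : ℂ) * ((1 : ℂ) - (Real.sign ω : ℂ)) * 𝓕 ψ ω‖ ^ 2)
        = 0 := by
      rw [← setLIntegral_congr (Ioi_ae_eq_Ici (a := (0:ℝ)))]
      rw [show (0 : ENNReal) = ∫⁻ _ in Set.Ioi (0:ℝ), 0 from (lintegral_zero).symm]
      apply setLIntegral_congr_fun measurableSet_Ioi
      intro ω hω
      beta_reduce
      rw [Real.sign_of_pos hω]
      norm_num
    rw [h1, h2, add_zero, lintegral_const_mul 2 hGmeas]
  -- the right lintegral also equals 2 * ∫⁻ over Iio 0 of G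
  have hR : ∫⁻ ω : ℝ, ENNReal.ofReal (‖𝓕 ψ ω‖ ^ 2)
      = 2 * ∫⁻ ω in Set.Iio (0:ℝ), G ω := by
    have hsplit : ∫⁻ ω : ℝ, G ω
        = (∫⁻ ω in Set.Iio (0:ℝ), G ω) + ∫⁻ ω in Set.Ici (0:ℝ), G ω := by
      rw [← lintegral_add_compl G measurableSet_Iio, hIci]
    have hhalf : ∫⁻ ω in Set.Ici (0:ℝ), G ω = ∫⁻ ω in Set.Iio (0:ℝ), G ω := by
      rw [← setLIntegral_congr (Ioi_ae_eq_Ici (a := (0:ℝ)))]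
      have hmp : MeasurePreserving (fun x : ℝ => -x) volume volume :=
        Measure.measurePreserving_neg volume
      have hemb : MeasurableEmbedding (fun x : ℝ => -x) :=
        (MeasurableEquiv.neg ℝ).measurableEmbedding
      have := hmp.setLIntegral_comp_preimage_emb hemb G (Set.Ioi (0:ℝ))
      have hpre : (fun x : ℝ => -x) ⁻¹' Set.Ioi (0:ℝ) = Set.Iio 0 := by
        ext x; simp
      rw [hpre] at this
      rw [← this]
      apply setLIntegral_congr_fun measurableSet_Iio
      intro ω _
      rw [hGdef]
      simp only
      rw [hnormneg]
    rw [show (∫⁻ ω : ℝ, ENNReal.ofReal (‖𝓕 ψ ω‖ ^ 2)) = ∫⁻ ω : ℝ, G ω from rfl,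
      hsplit, hhalf, two_mul]
  rw [hL, hR]
end

section
/- Let ψ : ℝ → ℂ be integrable, square-integrable, and real-valued, with Fourier transform Ψ = 𝓕ψ. Then the Fourier-Like kernel Φ(ω) = (1/√2)·(1 - sgn(ω))·Ψ(ω) has the same admissibility coefficient as Ψ: ∫ℝ ‖(1/√2)·(1 - sgn(ω))·Ψ(ω)‖²/|ω| dω = ∫ℝ ‖Ψ(ω)‖²/|ω| dω. (Admissibility part of Proposition 3.) -/
open MeasureTheory FourierTransform

lemma stmt_9_aux (f : ℝ → ℝ) (hm : AEStronglyMeasurable f (volume : Measure ℝ))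
    (h0 : ∀ ω, 0 ≤ f ω) (heven : ∀ ω, f (-ω) = f ω) (hz : f 0 = 0) :
    ∫ ω : ℝ, (if ω < 0 then 2 * f ω else 0) = ∫ ω : ℝ, f ω := by
  set g : ℝ → ℝ := fun ω => if ω < 0 then 2 * f ω else 0 with hgdef
  have hg0 : ∀ ω, 0 ≤ g ω := by
    intro ω
    by_cases h : ω < 0 <;> simp [g, h, mul_nonneg, h0 ω]
  have key : ∀ ω, g ω + g (-ω) = 2 * f ω := by
    intro ω
    rcases lt_trichotomy ω 0 with h | h | h
    · have h' : ¬ (-ω < 0) := by linarith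
      simp [g, h, h']
    · subst h
      simp [g, hz]
    · have h' : -ω < 0 := by linarith
      simp [g, not_lt.mpr h.le, h', heven]
  have hgm : AEStronglyMeasurable g (volume : Measure ℝ) := by
    have : g = Set.indicator (Set.Iio (0:ℝ)) (fun ω => 2 * f ω) := by
      funext ω
      simp [g, Set.indicator_apply, Set.mem_Iio]
    rw [this]
    exact (hm.const_mul 2).indicator measurableSet_Iio
  by_cases hfi : Integrable f (volume : Measure ℝ)
  · have hgi : Integrable g (volume : Measure ℝ) := by
      refine ((hfi.const_mul 2).mono hgm ?_)
      filter_upwards with ω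
      rw [Real.norm_of_nonneg (hg0 ω), Real.norm_of_nonneg (mul_nonneg (by norm_num) (h0 ω))]
      have := hg0 (-ω)
      linarith [key ω]
    have h1 : ∫ ω : ℝ, g (-ω) = ∫ ω : ℝ, g ω := integral_neg_eq_self g volume
    have h2 : ∫ ω : ℝ, (g ω + g (-ω)) = ∫ ω : ℝ, 2 * f ω := by
      congr 1
      funext ω
      exact key ω
    rw [integral_add hgi hgi.comp_neg, h1, MeasureTheory.integral_const_mul] at h2
    linarith
  · have hgni : ¬ Integrable g (volume : Measure ℝ) := by
      intro hgi
      apply hfi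
      have h3 : Integrable (fun ω => g ω + g (-ω)) (volume : Measure ℝ) :=
        hgi.add hgi.comp_neg
      have h4 : Integrable (fun ω => 2 * f ω) (volume : Measure ℝ) := by
        simpa only [key] using h3
      have := h4.const_mul (2⁻¹ : ℝ)
      simpa [← mul_assoc] using this
    rw [integral_undef hgni, integral_undef hfi]

/-- Admissibility part of Proposition 3: the Fourier-Like kernel
`(1/√2)·(1 - sgn ω)·Ψ(ω)` has the same admissibility coefficient as `Ψ = 𝓕ψ`. -/
theorem stmt_9 (ψ : ℝ → ℂ)
    (hψ1 : Integrable ψ) (hψ2 : MemLp ψ 2 (volume : Measure ℝ))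
    (hψreal : ∀ t : ℝ, (ψ t).im = 0) :
    ∫ ω : ℝ, ‖(1 / Real.sqrt 2 : ℂ) * ((1 : ℂ) - (Real.sign ω : ℂ)) * 𝓕 ψ ω‖ ^ 2 / |ω|
      = ∫ ω : ℝ, ‖𝓕 ψ ω‖ ^ 2 / |ω| := by
  have hconj : ∀ ω : ℝ, 𝓕 ψ (-ω) = starRingEnd ℂ (𝓕 ψ ω) := by
    intro ω
    rw [Real.fourier_real_eq_integral_exp_smul,
      Real.fourier_real_eq_integral_exp_smul, ← integral_conj]
    congr 1
    ext v
    rw [smul_eq_mul, smul_eq_mul, map_mul, ← Complex.exp_conj]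
    congr 1
    · rw [map_mul, Complex.conj_I, Complex.conj_ofReal]
      push_cast
      ring
    · exact (Complex.conj_eq_iff_im.mpr (hψreal v)).symm
  have hΨcont : Continuous (𝓕 ψ) :=
    VectorFourier.fourierIntegral_continuous Real.continuous_fourierChar
      (by exact (continuous_inner (𝕜 := ℝ) (E := ℝ))) hψ1
  set f : ℝ → ℝ := fun ω => ‖𝓕 ψ ω‖ ^ 2 / |ω| with hfdef
  have hm : AEStronglyMeasurable f (volume : Measure ℝ) :=
    (((hΨcont.norm.pow 2).measurable).div (measurable_abs)).aestronglyMeasurable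
  have h0 : ∀ ω, 0 ≤ f ω := by
    intro ω
    apply div_nonneg (by positivity) (abs_nonneg ω)
  have heven : ∀ ω, f (-ω) = f ω := by
    intro ω
    simp only [f, hconj, abs_neg]
    rw [RCLike.norm_conj]
  have hz : f 0 = 0 := by simp [f]
  have hLHS : (fun ω : ℝ =>
      ‖(1 / Real.sqrt 2 : ℂ) * ((1 : ℂ) - (Real.sign ω : ℂ)) * 𝓕 ψ ω‖ ^ 2 / |ω|)
      = fun ω : ℝ => if ω < 0 then 2 * f ω else 0 := by
    funext ω
    rcases lt_trichotomy ω 0 with h | h | h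
    · rw [if_pos h, Real.sign_of_neg h]
      have hc : ((1 : ℂ) - ((-1 : ℝ) : ℂ)) = 2 := by push_cast; ring
      rw [hc]
      rw [norm_mul, mul_pow, norm_mul]
      have h2 : ‖(1 / Real.sqrt 2 : ℂ)‖ = 1 / Real.sqrt 2 := by
        rw [norm_div, Complex.norm_real]
        simp [Real.sqrt_nonneg, abs_of_nonneg]
      have h3 : ‖(2 : ℂ)‖ = 2 := by norm_num
      rw [h2, h3]
      have h4 : (1 / Real.sqrt 2 * 2) ^ 2 = 2 := by
        rw [mul_pow, div_pow, one_pow, Real.sq_sqrt (by norm_num : (0:ℝ) ≤ 2)]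
        norm_num
      rw [h4, mul_div_assoc]
    · subst h
      simp
    · rw [if_neg (not_lt.mpr h.le), Real.sign_of_pos h]
      simp
  rw [hLHS]
  exact stmt_9_aux f hm h0 heven hz
end

section
/- Let N ≥ 1 and let ψ, φ : ℝ → ℂ be such that t ↦ t^k·ψ(t) and t ↦ t^k·φ(t) are integrable for 0 ≤ k ≤ N-1, and suppose 𝓕φ(ω) = -i·sgn(ω)·𝓕ψ(ω) for every ω ∈ ℝ (i.e., φ is a Hilbert transform pair of ψ). If ∫ℝ t^k·ψ(t) dt = 0 for every k with 0 ≤ k ≤ N-1, then the Fourier-Like wavelet g(t) = (1/√2)·(ψ(t) - i·φ(t)) has N vanishing moments: ∫ℝ t^k·g(t) dt = 0 for every k with 0 ≤ k ≤ N-1. (Proposition 4.) -/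
open MeasureTheory FourierTransform Filter Topology

/-- Proposition 4: the Fourier-Like wavelet `(1/√2)·(ψ - i·φ)` has the same
`N` vanishing moments as its generating wavelet `ψ`. -/
theorem stmt_10 (N : ℕ) (hN : 1 ≤ N) (ψ φ : ℝ → ℂ)
    (hψ : ∀ k : ℕ, k ≤ N - 1 → Integrable (fun t : ℝ => (t : ℂ) ^ k * ψ t))
    (hφ : ∀ k : ℕ, k ≤ N - 1 → Integrable (fun t : ℝ => (t : ℂ) ^ k * φ t))
    (h : ∀ ω : ℝ, 𝓕 φ ω = -Complex.I * (Real.sign ω : ℂ) * 𝓕 ψ ω)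
    (hm : ∀ k : ℕ, k ≤ N - 1 → ∫ t : ℝ, (t : ℂ) ^ k * ψ t = 0) :
    ∀ k : ℕ, k ≤ N - 1 →
      ∫ t : ℝ, (t : ℂ) ^ k * ((1 / Real.sqrt 2 : ℂ) * (ψ t - Complex.I * φ t)) = 0 := by
  intro k hk
  set ψ₂ : ℝ → ℂ := fun t => -Complex.I * ψ t with hψ₂def
  -- integrability of x ^ n • f for n ≤ k
  have hintψ : ∀ n : ℕ, (n : ℕ∞) ≤ (k : ℕ∞) →
      Integrable (fun x : ℝ => x ^ n • ψ x) := by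
    intro n hn
    have hn' : n ≤ N - 1 := le_trans (by exact_mod_cast hn) hk
    apply (hψ n hn').congr
    filter_upwards with x
    simp [Complex.real_smul]
  have hintψ₂ : ∀ n : ℕ, (n : ℕ∞) ≤ (k : ℕ∞) →
      Integrable (fun x : ℝ => x ^ n • ψ₂ x) := by
    intro n hn
    have hn' : n ≤ N - 1 := le_trans (by exact_mod_cast hn) hk
    apply ((hψ n hn').const_mul (-Complex.I)).congr
    filter_upwards with x
    simp [hψ₂def, Complex.real_smul]
    ring
  have hintφ : ∀ n : ℕ, (n : ℕ∞) ≤ (k : ℕ∞) →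
      Integrable (fun x : ℝ => x ^ n • φ x) := by
    intro n hn
    have hn' : n ≤ N - 1 := le_trans (by exact_mod_cast hn) hk
    apply (hφ n hn').congr
    filter_upwards with x
    simp [Complex.real_smul]
  -- iterated derivative formulas
  have hDφ : iteratedDeriv k (𝓕 φ) =
      𝓕 (fun x : ℝ => (-2 * Real.pi * Complex.I * x) ^ k • φ x) :=
    Real.iteratedDeriv_fourier (N := (k : ℕ∞)) hintφ le_rfl
  have hDψ₂ : iteratedDeriv k (𝓕 ψ₂) =
      𝓕 (fun x : ℝ => (-2 * Real.pi * Complex.I * x) ^ k • ψ₂ x) :=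
    Real.iteratedDeriv_fourier (N := (k : ℕ∞)) hintψ₂ le_rfl
  -- 𝓕 ψ₂ = -I * 𝓕 ψ
  have hFψ₂ : 𝓕 ψ₂ = fun ω => -Complex.I * 𝓕 ψ ω := by
    have := VectorFourier.fourierIntegral_const_smul 𝐞 (volume : Measure ℝ) (innerₗ ℝ)
      ψ (-Complex.I)
    ext ω
    exact congrFun this ω
  -- eventual equality on Ioi 0
  have hEq : Set.EqOn (𝓕 (fun x : ℝ => (-2 * Real.pi * Complex.I * x) ^ k • φ x))
      (𝓕 (fun x : ℝ => (-2 * Real.pi * Complex.I * x) ^ k • ψ₂ x)) (Set.Ioi 0) := by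
    intro ω hω
    rw [← hDφ, ← hDψ₂]
    apply Filter.EventuallyEq.iteratedDeriv_eq
    filter_upwards [Ioi_mem_nhds (Set.mem_Ioi.mp hω)] with x hx
    rw [h x, hFψ₂, Real.sign_of_pos hx]
    push_cast
    ring
  -- continuity of both Fourier integrals
  have cont : ∀ f : ℝ → ℂ, Integrable f → Continuous (𝓕 f) := fun f hf =>
    VectorFourier.fourierIntegral_continuous Real.continuous_fourierChar continuous_inner hf
  have intφ' : Integrable (fun x : ℝ => (-2 * Real.pi * Complex.I * x) ^ k • φ x) := by
    apply ((hφ k hk).const_mul ((-2 * Real.pi * Complex.I) ^ k)).congr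
    filter_upwards with x
    simp [smul_eq_mul]; ring
  have intψ₂' : Integrable (fun x : ℝ => (-2 * Real.pi * Complex.I * x) ^ k • ψ₂ x) := by
    apply ((hψ k hk).const_mul ((-2 * Real.pi * Complex.I) ^ k * (-Complex.I))).congr
    filter_upwards with x
    simp [hψ₂def, smul_eq_mul]; ring
  have contφ := cont _ intφ'
  have contψ₂ := cont _ intψ₂'
  -- equality at 0 by taking limits from the right
  have h0 : 𝓕 (fun x : ℝ => (-2 * Real.pi * Complex.I * x) ^ k • φ x) 0 =
      𝓕 (fun x : ℝ => (-2 * Real.pi * Complex.I * x) ^ k • ψ₂ x) 0 := by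
    have t1 : Tendsto (𝓕 (fun x : ℝ => (-2 * Real.pi * Complex.I * x) ^ k • φ x)) (𝓝[>] 0)
        (𝓝 (𝓕 (fun x : ℝ => (-2 * Real.pi * Complex.I * x) ^ k • φ x) 0)) :=
      (contφ.tendsto 0).mono_left nhdsWithin_le_nhds
    have t2 : Tendsto (𝓕 (fun x : ℝ => (-2 * Real.pi * Complex.I * x) ^ k • φ x)) (𝓝[>] 0)
        (𝓝 (𝓕 (fun x : ℝ => (-2 * Real.pi * Complex.I * x) ^ k • ψ₂ x) 0)) := by
      refine ((contψ₂.tendsto 0).mono_left nhdsWithin_le_nhds).congr' ?_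
      filter_upwards [self_mem_nhdsWithin] with x hx
      exact (hEq hx).symm
    exact tendsto_nhds_unique t1 t2
  -- evaluate at 0 : Fourier transform at 0 is the integral
  have ev : ∀ f : ℝ → ℂ, 𝓕 f 0 = ∫ t, f t := by
    intro f; simp [Real.fourier_real_eq]
  rw [ev, ev] at h0
  -- compute both integrals
  have hψk := hm k hk
  have hrhs : ∫ x : ℝ, (-2 * Real.pi * Complex.I * x) ^ k • ψ₂ x = 0 := by
    have : (fun x : ℝ => (-2 * Real.pi * Complex.I * x) ^ k • ψ₂ x)
        = fun x : ℝ => ((-2 * Real.pi * Complex.I) ^ k * (-Complex.I)) * ((x : ℂ) ^ k * ψ x) := by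
      funext x; simp [hψ₂def, smul_eq_mul]; ring
    rw [this, integral_const_mul, hψk, mul_zero]
  have hlhs : ∫ x : ℝ, (-2 * Real.pi * Complex.I * x) ^ k • φ x
      = (-2 * Real.pi * Complex.I) ^ k * ∫ x : ℝ, (x : ℂ) ^ k * φ x := by
    rw [← integral_const_mul]
    congr 1; funext x; simp [smul_eq_mul]; ring
  have hc : (-2 * Real.pi * Complex.I) ^ k ≠ 0 := by
    apply pow_ne_zero
    simp [Real.pi_ne_zero, Complex.I_ne_zero, Complex.ofReal_ne_zero]
  have hφk : ∫ x : ℝ, (x : ℂ) ^ k * φ x = 0 := by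
    have := h0
    rw [hlhs, hrhs] at this
    exact (mul_eq_zero.mp this).resolve_left hc
  -- conclude
  have : (fun t : ℝ => (t : ℂ) ^ k * ((1 / Real.sqrt 2 : ℂ) * (ψ t - Complex.I * φ t)))
      = fun t : ℝ => (1 / Real.sqrt 2 : ℂ) * ((t : ℂ) ^ k * ψ t)
        - ((1 / Real.sqrt 2 : ℂ) * Complex.I) * ((t : ℂ) ^ k * φ t) := by
    funext t; ring
  rw [this, integral_sub (((hψ k hk).const_mul _)) (((hφ k hk).const_mul _)),
    integral_const_mul, integral_const_mul, hψk, hφk]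
  simp
end

section
/- Let ψ : ℝ → ℂ be integrable and square-integrable, with Fourier transform Ψ = 𝓕ψ, and let ε ∈ {1, -1}. Then the Hartley-Like kernel Φ(ω) = (1/√2)·(1 + ε·i·sgn(ω))·Ψ(ω) has the same energy in the frequency domain as Ψ: ∫ℝ ‖(1/√2)·(1 + ε·i·sgn(ω))·Ψ(ω)‖² dω = ∫ℝ ‖Ψ(ω)‖² dω. (Energy part of Proposition 5: the Hartley-Like wavelet (ψ ∓ ℋψ)/√2 has the same energy as its generating wavelet ψ.) -/
open MeasureTheory FourierTransform

/-- Energy part of Proposition 5: the Hartley-Like kernel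
`(1/√2)·(1 + ε·i·sgn ω)·Ψ(ω)` (with `ε = ±1`) has the same frequency-domain
energy as `Ψ = 𝓕ψ`. -/
theorem stmt_11 (ψ : ℝ → ℂ)
    (hψ1 : Integrable ψ) (hψ2 : MemLp ψ 2 (volume : Measure ℝ))
    (ε : ℝ) (hε : ε = 1 ∨ ε = -1) :
    ∫ ω : ℝ, ‖(1 / Real.sqrt 2 : ℂ) * ((1 : ℂ) + (ε : ℂ) * Complex.I * (Real.sign ω : ℂ)) * 𝓕 ψ ω‖ ^ 2
      = ∫ ω : ℝ, ‖𝓕 ψ ω‖ ^ 2 := by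
  have h0 : ∀ᵐ ω : ℝ, ω ≠ 0 := by
    rw [ae_iff]
    have : {a : ℝ | ¬ a ≠ 0} = {0} := by ext x; simp
    rw [this]
    simp
  refine integral_congr_ae (h0.mono fun ω hω => ?_)
  have hs : (Real.sign ω) ^ 2 = 1 := by
    rcases lt_or_gt_of_ne hω with h | h
    · rw [Real.sign_of_neg h]; norm_num
    · rw [Real.sign_of_pos h]; norm_num
  have hε2 : ε ^ 2 = 1 := by rcases hε with h | h <;> rw [h] <;> norm_num
  dsimp only
  rw [norm_mul, mul_pow]
  have hc : ‖(1 / Real.sqrt 2 : ℂ) * (1 + (ε : ℂ) * Complex.I * (Real.sign ω : ℂ))‖ ^ 2 = 1 := by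
    rw [norm_mul, mul_pow]
    have h1 : ‖(1 / Real.sqrt 2 : ℂ)‖ ^ 2 = 1 / 2 := by
      rw [norm_div]
      simp only [norm_one]
      rw [Complex.norm_real]
      rw [div_pow, Real.norm_eq_abs, sq_abs, Real.sq_sqrt (by norm_num : (2:ℝ) ≥ 0)]
      norm_num
    have h2 : ‖(1 + (ε : ℂ) * Complex.I * (Real.sign ω : ℂ))‖ ^ 2 = 2 := by
      simp only [Complex.sq_norm, Complex.normSq_apply]
      simp
      nlinarith [hs, hε2]
    rw [h1, h2]; norm_num
  rw [hc, one_mul]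
end

section
/- Let ψ : ℝ → ℂ be integrable and square-integrable, with Fourier transform Ψ = 𝓕ψ, and let ε ∈ {1, -1}. Then the Hartley-Like kernel Φ(ω) = (1/√2)·(1 + ε·i·sgn(ω))·Ψ(ω) has the same admissibility coefficient as Ψ: ∫ℝ ‖(1/√2)·(1 + ε·i·sgn(ω))·Ψ(ω)‖²/|ω| dω = ∫ℝ ‖Ψ(ω)‖²/|ω| dω. (Admissibility part of Proposition 5.) -/
open MeasureTheory FourierTransform

/-- Admissibility part of Proposition 5: the Hartley-Like kernel
`(1/√2)·(1 + ε·i·sgn ω)·Ψ(ω)` (with `ε = ±1`) has the same admissibility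
coefficient as `Ψ = 𝓕ψ`. -/
theorem stmt_13 (ψ : ℝ → ℂ)
    (hψ1 : Integrable ψ) (hψ2 : MemLp ψ 2 (volume : Measure ℝ))
    (ε : ℝ) (hε : ε = 1 ∨ ε = -1) :
    ∫ ω : ℝ, ‖(1 / Real.sqrt 2 : ℂ) * ((1 : ℂ) + (ε : ℂ) * Complex.I * (Real.sign ω : ℂ)) * 𝓕 ψ ω‖ ^ 2 / |ω|
      = ∫ ω : ℝ, ‖𝓕 ψ ω‖ ^ 2 / |ω| := by
  congr 1
  funext ω
  rcases eq_or_ne ω 0 with h | h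
  · simp [h]
  · have hs : Real.sign ω = 1 ∨ Real.sign ω = -1 := by
      rcases lt_or_gt_of_ne h with h' | h'
      · right; exact Real.sign_of_neg h'
      · left; exact Real.sign_of_pos h'
    have hkey : ‖(1 / Real.sqrt 2 : ℂ) * ((1 : ℂ) + (ε : ℂ) * Complex.I * (Real.sign ω : ℂ))‖ = 1 := by
      have h2 : (0:ℝ) < Real.sqrt 2 := by positivity
      rcases hε with hε | hε <;> rcases hs with hs | hs <;>
        rw [hε, hs] <;>
        · rw [Complex.norm_def, Complex.normSq_apply]
          push_cast
          simp
          nlinarith [Real.mul_self_sqrt (show (0:ℝ) ≤ 2 by norm_num)]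
    rw [show (1 / Real.sqrt 2 : ℂ) * ((1 : ℂ) + (ε : ℂ) * Complex.I * (Real.sign ω : ℂ)) * 𝓕 ψ ω
        = ((1 / Real.sqrt 2 : ℂ) * ((1 : ℂ) + (ε : ℂ) * Complex.I * (Real.sign ω : ℂ))) * 𝓕 ψ ω from rfl,
      norm_mul, hkey, one_mul]
end

section
/- Let N ≥ 1 and let ψ, φ : ℝ → ℂ be such that t ↦ t^k·ψ(t) and t ↦ t^k·φ(t) are integrable for 0 ≤ k ≤ N-1, and suppose 𝓕φ(ω) = -i·sgn(ω)·𝓕ψ(ω) for every ω ∈ ℝ (i.e., φ is a Hilbert transform pair of ψ). If ∫ℝ t^k·ψ(t) dt = 0 for every k with 0 ≤ k ≤ N-1, then for either sign ε ∈ {1, -1} the Hartley-Like wavelet g(t) = (1/√2)·(ψ(t) + ε·φ(t)) has N vanishing moments: ∫ℝ t^k·g(t) dt = 0 for every k with 0 ≤ k ≤ N-1. (Proposition 6.) -/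
open MeasureTheory FourierTransform Filter Topology Complex

/-- Iterated derivative commutes with multiplication by a complex constant. -/
lemma aux_iteratedDeriv_const_mul (c : ℂ) (f : ℝ → ℂ) (n : ℕ) :
    iteratedDeriv n (fun x => c * f x) = fun x => c * iteratedDeriv n f x := by
  induction n with
  | zero => simp
  | succ n ih =>
    rw [iteratedDeriv_succ, ih, iteratedDeriv_succ]
    funext x
    exact deriv_const_mul_field c

/-- Fourier integral at the origin is the plain integral. -/
lemma aux_fourier_at_zero (g : ℝ → ℂ) : 𝓕 g 0 = ∫ t : ℝ, g t := by
  simp [Real.fourier_real_eq]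

/-- Proposition 6: the Hartley-Like wavelet `(1/√2)·(ψ + ε·φ)` (with `ε = ±1`)
has the same `N` vanishing moments as its generating wavelet `ψ`. -/
theorem stmt_14 (N : ℕ) (hN : 1 ≤ N) (ψ φ : ℝ → ℂ)
    (hψ : ∀ k : ℕ, k ≤ N - 1 → Integrable (fun t : ℝ => (t : ℂ) ^ k * ψ t))
    (hφ : ∀ k : ℕ, k ≤ N - 1 → Integrable (fun t : ℝ => (t : ℂ) ^ k * φ t))
    (h : ∀ ω : ℝ, 𝓕 φ ω = -Complex.I * (Real.sign ω : ℂ) * 𝓕 ψ ω)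
    (hm : ∀ k : ℕ, k ≤ N - 1 → ∫ t : ℝ, (t : ℂ) ^ k * ψ t = 0) :
    ∀ ε : ℝ, (ε = 1 ∨ ε = -1) → ∀ k : ℕ, k ≤ N - 1 →
      ∫ t : ℝ, (t : ℂ) ^ k * ((1 / Real.sqrt 2 : ℂ) * (ψ t + (ε : ℂ) * φ t)) = 0 := by
  set M : ℕ := N - 1 with hM
  -- integrability in the form needed for Fourier derivative lemmas
  have hsmul : ∀ (f : ℝ → ℂ), (∀ k : ℕ, k ≤ M → Integrable (fun t : ℝ => (t : ℂ) ^ k * f t)) →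
      ∀ n : ℕ, (n : ℕ∞) ≤ (M : ℕ∞) → Integrable (fun x : ℝ => x ^ n • f x) := by
    intro f hf n hn
    have hn' : n ≤ M := by exact_mod_cast hn
    have := hf n hn'
    refine this.congr ?_
    filter_upwards with x
    simp [Complex.real_smul]
  have hψs := hsmul ψ hψ
  have hφs := hsmul φ hφ
  -- iterated derivatives of the Fourier transforms
  have hDψ : ∀ k : ℕ, k ≤ M →
      iteratedDeriv k (𝓕 ψ) = 𝓕 (fun x : ℝ => (-2 * Real.pi * Complex.I * x) ^ k • ψ x) := by
    intro k hk
    exact Real.iteratedDeriv_fourier (N := (M : ℕ∞)) hψs (by exact_mod_cast hk)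
  have hDφ : ∀ k : ℕ, k ≤ M →
      iteratedDeriv k (𝓕 φ) = 𝓕 (fun x : ℝ => (-2 * Real.pi * Complex.I * x) ^ k • φ x) := by
    intro k hk
    exact Real.iteratedDeriv_fourier (N := (M : ℕ∞)) hφs (by exact_mod_cast hk)
  -- value of these derivatives at 0 in terms of moments
  have hval : ∀ (f : ℝ → ℂ), (∀ k : ℕ, k ≤ M → Integrable (fun t : ℝ => (t : ℂ) ^ k * f t)) →
      ∀ k : ℕ, 𝓕 (fun x : ℝ => (-2 * Real.pi * Complex.I * x) ^ k • f x) 0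
        = (-2 * Real.pi * Complex.I) ^ k * ∫ t : ℝ, (t : ℂ) ^ k * f t := by
    intro f hf k
    rw [aux_fourier_at_zero]
    have : (fun x : ℝ => (-2 * Real.pi * Complex.I * x) ^ k • f x)
        = fun x : ℝ => (-2 * Real.pi * Complex.I) ^ k • ((x : ℂ) ^ k * f x) := by
      funext x
      simp [smul_eq_mul, mul_pow]
      ring
    rw [this, integral_smul, smul_eq_mul]
  -- ψ-side: derivatives vanish at 0
  have hψ0 : ∀ k : ℕ, k ≤ M → iteratedDeriv k (𝓕 ψ) 0 = 0 := by
    intro k hk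
    rw [hDψ k hk, hval ψ hψ k, hm k hk, mul_zero]
  -- smoothness of the Fourier transforms
  have hnorm : ∀ (f : ℝ → ℂ), (∀ k : ℕ, k ≤ M → Integrable (fun t : ℝ => (t : ℂ) ^ k * f t)) →
      ∀ n : ℕ, (n : ℕ∞) ≤ (M : ℕ∞) → Integrable (fun v : ℝ => ‖v‖ ^ n * ‖f v‖) := by
    intro f hf n hn
    have hn' : n ≤ M := by exact_mod_cast hn
    refine (hf n hn').norm.congr ?_
    filter_upwards with x
    simp [Real.norm_eq_abs, abs_pow]
  have hcψ : ContDiff ℝ (M : ℕ∞) (𝓕 ψ) := Real.contDiff_fourier (hnorm ψ hψ)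
  have hcφ : ContDiff ℝ (M : ℕ∞) (𝓕 φ) := Real.contDiff_fourier (hnorm φ hφ)
  -- φ-side: derivatives vanish at 0 via the Hilbert-pair relation on (0,∞)
  have hφ0 : ∀ k : ℕ, k ≤ M → iteratedDeriv k (𝓕 φ) 0 = 0 := by
    intro k hk
    have heq : Set.EqOn (𝓕 φ) (fun ω => -Complex.I * 𝓕 ψ ω) (Set.Ioi (0 : ℝ)) := by
      intro ω hω
      have : Real.sign ω = 1 := Real.sign_of_pos hω
      rw [h ω, this]
      simp
    have heqD := heq.iteratedDeriv_of_isOpen isOpen_Ioi k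
    have hcont1 : Continuous (iteratedDeriv k (𝓕 φ)) :=
      hcφ.continuous_iteratedDeriv k (by exact_mod_cast hk)
    have hcont2 : Continuous (iteratedDeriv k (𝓕 ψ)) :=
      hcψ.continuous_iteratedDeriv k (by exact_mod_cast hk)
    have t1 : Tendsto (iteratedDeriv k (𝓕 φ)) (𝓝[>] (0:ℝ)) (𝓝 (iteratedDeriv k (𝓕 φ) 0)) :=
      (hcont1.tendsto 0).mono_left nhdsWithin_le_nhds
    have t2 : Tendsto (iteratedDeriv k (𝓕 φ)) (𝓝[>] (0:ℝ)) (𝓝 0) := by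
      have t3 : Tendsto (fun ω => -Complex.I * iteratedDeriv k (𝓕 ψ) ω) (𝓝[>] (0:ℝ))
          (𝓝 (-Complex.I * iteratedDeriv k (𝓕 ψ) 0)) :=
        ((hcont2.const_smul (-Complex.I)).tendsto 0).mono_left nhdsWithin_le_nhds
      rw [hψ0 k hk, mul_zero] at t3
      refine t3.congr' ?_
      filter_upwards [self_mem_nhdsWithin] with ω hω
      rw [heqD hω, aux_iteratedDeriv_const_mul]
    exact tendsto_nhds_unique t1 t2
  -- hence the moments of φ vanish
  have hmφ : ∀ k : ℕ, k ≤ M → ∫ t : ℝ, (t : ℂ) ^ k * φ t = 0 := by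
    intro k hk
    have := hφ0 k hk
    rw [hDφ k hk, hval φ hφ k] at this
    have hne : ((-2 * Real.pi * Complex.I) ^ k : ℂ) ≠ 0 := by
      apply pow_ne_zero
      simp [Real.pi_ne_zero, Complex.I_ne_zero, Complex.ofReal_ne_zero]
    exact (mul_eq_zero.mp this).resolve_left hne
  -- conclude
  intro ε _ k hk
  have hsplit : (fun t : ℝ => (t : ℂ) ^ k * ((1 / Real.sqrt 2 : ℂ) * (ψ t + (ε : ℂ) * φ t)))
      = fun t : ℝ => (1 / Real.sqrt 2 : ℂ) * ((t : ℂ) ^ k * ψ t)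
        + ((1 / Real.sqrt 2 : ℂ) * ε) * ((t : ℂ) ^ k * φ t) := by
    funext t; ring
  have e1 : ∫ t : ℝ, (1 / Real.sqrt 2 : ℂ) * ((t : ℂ) ^ k * ψ t)
      = (1 / Real.sqrt 2 : ℂ) * ∫ t : ℝ, (t : ℂ) ^ k * ψ t := by
    simpa [smul_eq_mul] using
      integral_smul (μ := volume) (1 / Real.sqrt 2 : ℂ) (fun t : ℝ => (t : ℂ) ^ k * ψ t)
  have e2 : ∫ t : ℝ, ((1 / Real.sqrt 2 : ℂ) * ε) * ((t : ℂ) ^ k * φ t)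
      = ((1 / Real.sqrt 2 : ℂ) * ε) * ∫ t : ℝ, (t : ℂ) ^ k * φ t := by
    simpa [smul_eq_mul] using
      integral_smul (μ := volume) ((1 / Real.sqrt 2 : ℂ) * ε) (fun t : ℝ => (t : ℂ) ^ k * φ t)
  rw [hsplit, integral_add ((hψ k hk).const_mul _) ((hφ k hk).const_mul _), e1, e2,
    hm k hk, hmφ k hk]
  simp
end

section
/- Let N ≥ 1 and let ψ, φ : ℝ → ℂ be such that t ↦ t^k·ψ(t) and t ↦ t^k·φ(t) are integrable for 0 ≤ k ≤ N-1, and suppose 𝓕φ(ω) = -i·sgn(ω)·𝓕ψ(ω) for every ω ∈ ℝ (i.e., φ is a Hilbert transform pair of ψ). If ∫ℝ t^k·ψ(t) dt = 0 for every k with 0 ≤ k ≤ N-1, then the analytic wavelet g(t) = (1/√2)·(ψ(t) + i·φ(t)) has N vanishing moments: ∫ℝ t^k·g(t) dt = 0 for every k with 0 ≤ k ≤ N-1. (Analytic wavelets have the same null moments as their generating wavelet.) -/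
open MeasureTheory FourierTransform

lemma fourier_at_zero (f : ℝ → ℂ) : 𝓕 f 0 = ∫ t : ℝ, f t := by
  simp [Real.fourier_real_eq]

lemma deriv_zero_of_zero_on_Ici {g : ℝ → ℂ} (hg : Differentiable ℝ g)
    (h : ∀ x : ℝ, 0 ≤ x → g x = 0) : ∀ x : ℝ, 0 ≤ x → deriv g x = 0 := by
  intro x hx
  rcases eq_or_lt_of_le hx with rfl | hx'
  · have hu : UniqueDiffWithinAt ℝ (Set.Ici (0:ℝ)) 0 :=
      uniqueDiffOn_Ici 0 0 Set.self_mem_Ici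
    have h1 : HasDerivWithinAt g (deriv g 0) (Set.Ici 0) 0 :=
      (hg 0).hasDerivAt.hasDerivWithinAt
    have h2 : HasDerivWithinAt g 0 (Set.Ici 0) 0 :=
      (hasDerivWithinAt_const (0:ℝ) (Set.Ici (0:ℝ)) (0:ℂ)).congr
        (fun y hy => h y hy) (h 0 le_rfl)
    rw [← h1.derivWithin hu, h2.derivWithin hu]
  · have hev : g =ᶠ[nhds x] (fun _ => (0:ℂ)) :=
      Filter.eventuallyEq_of_mem (Ioi_mem_nhds hx') (fun y hy => h y (le_of_lt hy))
    rw [hev.deriv_eq, deriv_const]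

lemma iteratedDeriv_zero_on_Ici {g : ℝ → ℂ} {m : ℕ} (hg : ContDiff ℝ (m : ℕ∞) g)
    (h : ∀ x : ℝ, 0 ≤ x → g x = 0) :
    ∀ j : ℕ, j ≤ m → ∀ x : ℝ, 0 ≤ x → iteratedDeriv j g x = 0 := by
  intro j
  induction j with
  | zero => intro _ x hx; simpa using h x hx
  | succ j ih =>
    intro hj x hx
    rw [iteratedDeriv_succ]
    have hdiff : Differentiable ℝ (iteratedDeriv j g) :=
      hg.differentiable_iteratedDeriv j (by exact_mod_cast Nat.lt_of_succ_le hj)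
    exact deriv_zero_of_zero_on_Ici hdiff (ih (Nat.le_of_succ_le hj)) x hx

/-- Analytic wavelets have the same vanishing moments as their generating
wavelet: the analytic wavelet `(1/√2)·(ψ + i·φ)` has `N` vanishing moments. -/
theorem stmt_17 (N : ℕ) (hN : 1 ≤ N) (ψ φ : ℝ → ℂ)
    (hψ : ∀ k : ℕ, k ≤ N - 1 → Integrable (fun t : ℝ => (t : ℂ) ^ k * ψ t))
    (hφ : ∀ k : ℕ, k ≤ N - 1 → Integrable (fun t : ℝ => (t : ℂ) ^ k * φ t))
    (h : ∀ ω : ℝ, 𝓕 φ ω = -Complex.I * (Real.sign ω : ℂ) * 𝓕 ψ ω)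
    (hm : ∀ k : ℕ, k ≤ N - 1 → ∫ t : ℝ, (t : ℂ) ^ k * ψ t = 0) :
    ∀ k : ℕ, k ≤ N - 1 →
      ∫ t : ℝ, (t : ℂ) ^ k * ((1 / Real.sqrt 2 : ℂ) * (ψ t + Complex.I * φ t)) = 0 := by
  classical
  set χ : ℝ → ℂ := fun t => φ t + Complex.I * ψ t with hχdef
  have hχ : ∀ k : ℕ, k ≤ N - 1 → Integrable (fun t : ℝ => (t : ℂ) ^ k * χ t) := by
    intro k hk
    refine ((hφ k hk).add ((hψ k hk).const_mul Complex.I)).congr ?_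
    filter_upwards with t
    simp only [Pi.add_apply, hχdef]; ring
  have hχs : ∀ n : ℕ, (n : ℕ∞) ≤ ((N - 1 : ℕ) : ℕ∞) →
      Integrable (fun x : ℝ => x ^ n • χ x) := by
    intro n hn
    have hn' : n ≤ N - 1 := by exact_mod_cast hn
    refine (hχ n hn').congr ?_
    filter_upwards with t
    rw [← Complex.ofReal_pow, Complex.real_smul]
  have hχn : ∀ n : ℕ, (n : ℕ∞) ≤ ((N - 1 : ℕ) : ℕ∞) →
      Integrable (fun v : ℝ => ‖v‖ ^ n * ‖χ v‖) := by
    intro n hn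
    refine ((hχs n hn).norm).congr ?_
    filter_upwards with t
    simp [norm_smul, abs_pow]
  have hFlin : ∀ ω : ℝ, 𝓕 χ ω = 𝓕 φ ω + Complex.I * 𝓕 ψ ω := by
    intro ω
    have hφ0 : Integrable φ := by simpa using hφ 0 (Nat.zero_le _)
    have hψ0 : Integrable ψ := by simpa using hψ 0 (Nat.zero_le _)
    have h1 : Integrable (fun v : ℝ => 𝐞 (-(v * ω)) • φ v) :=
      by simpa [mul_comm] using (Real.fourierIntegral_convergent_iff ω).2 hφ0
    have h2 : Integrable (fun v : ℝ => 𝐞 (-(v * ω)) • ψ v) :=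
      by simpa [mul_comm] using (Real.fourierIntegral_convergent_iff ω).2 hψ0
    rw [Real.fourier_real_eq, Real.fourier_real_eq,
      Real.fourier_real_eq]
    calc (∫ v : ℝ, 𝐞 (-(v * ω)) • χ v)
        = ∫ v : ℝ, (𝐞 (-(v * ω)) • φ v + Complex.I * (𝐞 (-(v * ω)) • ψ v)) := by
          congr 1; funext v
          simp only [hχdef, Circle.smul_def, smul_eq_mul]
          ring
      _ = (∫ v : ℝ, 𝐞 (-(v * ω)) • φ v) + ∫ v : ℝ, Complex.I * (𝐞 (-(v * ω)) • ψ v) :=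
          integral_add h1 (h2.const_mul _)
      _ = _ := by rw [integral_const_mul]
  have hψ0' : 𝓕 ψ 0 = 0 := by
    rw [fourier_at_zero]
    simpa using hm 0 (Nat.zero_le _)
  have hF0 : ∀ x : ℝ, 0 ≤ x → 𝓕 χ x = 0 := by
    intro x hx
    rcases eq_or_lt_of_le hx with rfl | hx'
    · rw [hFlin 0, h 0]
      simp [hψ0']
    · rw [hFlin x, h x, Real.sign_of_pos hx']
      push_cast
      ring
  have hFc : ContDiff ℝ ((N - 1 : ℕ) : ℕ∞) (𝓕 χ) := Real.contDiff_fourier hχn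
  intro k hk
  have hk' : (k : ℕ∞) ≤ ((N - 1 : ℕ) : ℕ∞) := by exact_mod_cast hk
  have hIF : iteratedDeriv k (𝓕 χ) 0 = 0 :=
    iteratedDeriv_zero_on_Ici hFc hF0 k hk 0 le_rfl
  have hID := Real.iteratedDeriv_fourier (f := χ) (N := ((N - 1 : ℕ) : ℕ∞)) hχs hk'
  have hval := (congrFun hID 0).symm.trans hIF
  rw [fourier_at_zero] at hval
  have hmom : ∫ t : ℝ, (t : ℂ) ^ k * χ t = 0 := by
    have hconst : ((-2 * (Real.pi : ℂ) * Complex.I) ^ k : ℂ) ≠ 0 := by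
      apply pow_ne_zero
      simp [Real.pi_ne_zero, Complex.I_ne_zero, Complex.ofReal_ne_zero]
    have heq : (∫ t : ℝ, (-2 * (Real.pi : ℂ) * Complex.I * t) ^ k • χ t)
        = (-2 * (Real.pi : ℂ) * Complex.I) ^ k * ∫ t : ℝ, (t : ℂ) ^ k * χ t := by
      rw [← integral_const_mul]
      congr 1; funext t
      rw [smul_eq_mul, mul_pow]
      ring
    rw [heq] at hval
    exact (mul_eq_zero.1 hval).resolve_left hconst
  have hsplit : ∫ t : ℝ, (t : ℂ) ^ k * χ t
      = (∫ t : ℝ, (t : ℂ) ^ k * φ t) + Complex.I * ∫ t : ℝ, (t : ℂ) ^ k * ψ t := by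
    rw [← integral_const_mul, ← integral_add (hφ k hk) (((hψ k hk)).const_mul _)]
    congr 1; funext t
    simp only [hχdef]; ring
  have hmφ : ∫ t : ℝ, (t : ℂ) ^ k * φ t = 0 := by
    rw [hmom, hm k hk, mul_zero, add_zero] at hsplit
    exact hsplit.symm
  have hfin : (fun t : ℝ => (t : ℂ) ^ k * ((1 / Real.sqrt 2 : ℂ) * (ψ t + Complex.I * φ t)))
      = fun t : ℝ => (1 / Real.sqrt 2 : ℂ) * ((t : ℂ) ^ k * ψ t)
        + ((1 / Real.sqrt 2 : ℂ) * Complex.I) * ((t : ℂ) ^ k * φ t) := by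
    funext t; ring
  rw [hfin, integral_add ((hψ k hk).const_mul _) ((hφ k hk).const_mul _),
    integral_const_mul, integral_const_mul, hm k hk, hmφ]
  simp
end
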